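/- Assume additionally that f is convex with nonempty argmin, and let x̄^k denote the projection of x^k onto argmin f. Let ε > 0 satisfy ε + 1/ε = 1 + (1/τ)(1/γ − 1/2), set δ := [1 + (ε/(2τ))(1/γ − 1/2 − τ)]·L/(2ε), define the Lyapunov function F_k := f(x^k) + δ·Σ_{i=k−τ}^{k−1} (i − (k − τ) + 1)‖Δ^i‖₂², and set π_k := E(F_k − min f) and S(k,τ) := Σ_{i=k−τ}^{k−1} δ‖Δ^i‖₂². With β := max{8NL²/γ², (12N+2)L²τ + δτ} and α := β / [(L/(4τ))(1/γ − 1/2 − τ)], one has for all k: (π_k)² ≤ α·(π_k − π_{k+1})·(τ·E S(k,τ) + E‖x^k − x̄^k‖₂²). -/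

import Mathlib

open MeasureTheory Filter
open scoped BigOperators RealInnerProductSpace Topology

section aux
variable {E : Type*} [NormedAddCommGroup E] [InnerProductSpace ℝ E] [CompleteSpace E]

private lemma grad_continuous' (f : E → ℝ) (L : ℝ) (hL : 0 ≤ L)
    (hlip : ∀ y z : E, ‖gradient f y - gradient f z‖ ≤ L * ‖y - z‖) :
    Continuous (gradient f) := by
  have : LipschitzWith (Real.toNNReal L) (gradient f) := by
    apply LipschitzWith.of_dist_le_mul
    intro y z
    rw [dist_eq_norm, dist_eq_norm]
    calc ‖gradient f y - gradient f z‖ ≤ L * ‖y - z‖ := hlip y z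
      _ = (Real.toNNReal L : ℝ) * ‖y - z‖ := by rw [Real.coe_toNNReal _ hL]
  exact this.continuous

private lemma descent_lemma' (f : E → ℝ) (L : ℝ) (hL : 0 < L) (hdiff : Differentiable ℝ f)
    (hlip : ∀ y z : E, ‖gradient f y - gradient f z‖ ≤ L * ‖y - z‖) (x y : E) :
    f y ≤ f x + ⟪gradient f x, y - x⟫ + L / 2 * ‖y - x‖ ^ 2 := by
  set v := y - x with hv
  have hgc : Continuous (gradient f) := grad_continuous' f L hL.le hlip
  have hderiv : ∀ t : ℝ, HasDerivAt (fun s : ℝ => f (x + s • v)) ⟪gradient f (x + t • v), v⟫ t := by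
    intro t
    have h1 : HasDerivAt (fun s : ℝ => x + s • v) v t := by
      simpa using ((hasDerivAt_id t).smul_const v).const_add x
    have h2 : HasFDerivAt f (InnerProductSpace.toDual ℝ E (gradient f (x + t • v))) (x + t • v) := by
      have := (hdiff (x + t • v)).hasFDerivAt
      rwa [show InnerProductSpace.toDual ℝ E (gradient f (x + t • v)) = fderiv ℝ f (x + t • v) by
        rw [gradient, LinearIsometryEquiv.apply_symm_apply]]
    have := h2.comp_hasDerivAt t h1
    simpa [InnerProductSpace.toDual_apply_apply, Function.comp_def] using this
  have hcont : Continuous fun t : ℝ => ⟪gradient f (x + t • v), v⟫ := by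
    apply Continuous.inner
    · exact hgc.comp (by continuity)
    · exact continuous_const
  have hftc : f (x + (1:ℝ) • v) - f (x + (0:ℝ) • v) =
      ∫ t in (0:ℝ)..1, ⟪gradient f (x + t • v), v⟫ := by
    rw [← intervalIntegral.integral_eq_sub_of_hasDerivAt (fun t _ => hderiv t)
      (hcont.intervalIntegrable 0 1)]
  have hbound : ∀ t ∈ Set.Icc (0:ℝ) 1, ⟪gradient f (x + t • v), v⟫ ≤ ⟪gradient f x, v⟫ + L * t * ‖v‖ ^ 2 := by
    intro t ht
    have h1 : ⟪gradient f (x + t • v), v⟫ - ⟪gradient f x, v⟫ = ⟪gradient f (x + t • v) - gradient f x, v⟫ := by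
      rw [inner_sub_left]
    have h2 : ⟪gradient f (x + t • v) - gradient f x, v⟫ ≤ ‖gradient f (x + t • v) - gradient f x‖ * ‖v‖ :=
      real_inner_le_norm _ _
    have h3 : ‖gradient f (x + t • v) - gradient f x‖ ≤ L * (t * ‖v‖) := by
      have h := hlip (x + t • v) x
      have h4 : ‖t • v‖ = t * ‖v‖ := by
        rw [norm_smul, Real.norm_eq_abs, abs_of_nonneg ht.1]
      simpa [h4] using h
    have h5 : ‖gradient f (x + t • v) - gradient f x‖ * ‖v‖ ≤ L * (t * ‖v‖) * ‖v‖ :=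
      mul_le_mul_of_nonneg_right h3 (norm_nonneg v)
    nlinarith [sq_nonneg (‖v‖)]
  have hint : (∫ t in (0:ℝ)..1, ⟪gradient f (x + t • v), v⟫) ≤
      ∫ t in (0:ℝ)..1, (⟪gradient f x, v⟫ + L * t * ‖v‖ ^ 2) := by
    apply intervalIntegral.integral_mono_on (by norm_num)
    · exact hcont.intervalIntegrable 0 1
    · exact (by continuity : Continuous fun t : ℝ => ⟪gradient f x, v⟫ + L * t * ‖v‖ ^ 2).intervalIntegrable 0 1
    · exact hbound
  have heval : (∫ t in (0:ℝ)..1, (⟪gradient f x, v⟫ + L * t * ‖v‖ ^ 2)) =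
      ⟪gradient f x, v⟫ + L / 2 * ‖v‖ ^ 2 := by
    rw [intervalIntegral.integral_add (intervalIntegrable_const)
      ((by continuity : Continuous fun t : ℝ => L * t * ‖v‖ ^ 2).intervalIntegrable 0 1)]
    simp only [intervalIntegral.integral_const, smul_eq_mul]
    have h : (∫ t in (0:ℝ)..1, L * t * ‖v‖ ^ 2) = L * (1/2) * ‖v‖^2 := by
      have h2 : (fun t : ℝ => L * t * ‖v‖ ^ 2) = fun t : ℝ => (L * ‖v‖^2) * t := by ext t; ring
      rw [h2, intervalIntegral.integral_const_mul, integral_id]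
      ring
    rw [h]; ring
  have hfin : f (x + (1:ℝ) • v) - f (x + (0:ℝ) • v) ≤ ⟪gradient f x, v⟫ + L / 2 * ‖v‖ ^ 2 := by
    rw [hftc]; exact hint.trans (le_of_eq heval)
  simp only [one_smul, zero_smul, add_zero] at hfin
  have hxy : x + v = y := by rw [hv]; abel
  rw [hxy] at hfin
  linarith

private lemma convex_grad_ineq' (f : E → ℝ) (hconv : ConvexOn ℝ Set.univ f) (hdiff : Differentiable ℝ f)
    (x y : E) : f x + ⟪gradient f x, y - x⟫ ≤ f y := by
  set v := y - x with hv
  have hderiv : HasDerivAt (fun s : ℝ => f (x + s • v)) ⟪gradient f x, v⟫ 0 := by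
    have h1 : HasDerivAt (fun s : ℝ => x + s • v) v 0 := by
      simpa using ((hasDerivAt_id (0:ℝ)).smul_const v).const_add x
    have h2 : HasFDerivAt f (InnerProductSpace.toDual ℝ E (gradient f x)) (x + (0:ℝ) • v) := by
      have := (hdiff (x + (0:ℝ) • v)).hasFDerivAt
      rwa [show InnerProductSpace.toDual ℝ E (gradient f x) = fderiv ℝ f (x + (0:ℝ) • v) by
        rw [show x + (0:ℝ) • v = x by simp, gradient, LinearIsometryEquiv.apply_symm_apply]]
    have := h2.comp_hasDerivAt 0 h1
    simpa [InnerProductSpace.toDual_apply_apply, Function.comp_def] using this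
  have hslope : Tendsto (slope (fun s : ℝ => f (x + s • v)) 0) (𝓝[>] 0) (𝓝 ⟪gradient f x, v⟫) := by
    have := hasDerivAt_iff_tendsto_slope.mp hderiv
    exact this.mono_left (nhdsWithin_mono 0 (by intro t ht; exact ne_of_gt ht))
  have hbound : ∀ᶠ t in 𝓝[>] (0:ℝ), slope (fun s : ℝ => f (x + s • v)) 0 t ≤ f y - f x := by
    filter_upwards [Ioo_mem_nhdsGT_of_mem (by norm_num : (0:ℝ) ∈ Set.Ico (0:ℝ) 1)] with t ht
    have ht0 : 0 < t := ht.1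
    have ht1 : t < 1 := ht.2
    have hcvx : f (x + t • v) ≤ (1 - t) * f x + t * f y := by
      have h := hconv.2 (Set.mem_univ x) (Set.mem_univ y) (by linarith : (0:ℝ) ≤ 1 - t)
        (le_of_lt ht0) (by ring)
      have he : (1-t) • x + t • y = x + t • v := by
        rw [hv]; module
      rw [he] at h
      simpa using h
    rw [slope_def_field]
    simp only [zero_smul, add_zero, sub_zero]
    rw [div_le_iff₀ ht0]
    nlinarith
  have := le_of_tendsto hslope hbound
  linarith

end aux

section helpers

private lemma telescope_sum' {M : Type*} [AddCommGroup M] (g : ℕ → M) (a b : ℕ) (h : a ≤ b) :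
    ∑ m ∈ Finset.Ico a b, (g (m+1) - g m) = g b - g a := by
  rw [Finset.sum_Ico_eq_sub _ h, Finset.sum_range_sub, Finset.sum_range_sub]
  abel

private lemma eucl_norm_sq' {n : ℕ} (x : EuclideanSpace ℝ (Fin n)) :
    ‖x‖ ^ 2 = ∑ i, (x i) ^ 2 := by
  rw [EuclideanSpace.norm_eq, Real.sq_sqrt (by positivity)]
  congr 1; ext i; rw [Real.norm_eq_abs, sq_abs]

private lemma eucl_coord_le' {n : ℕ} (x : EuclideanSpace ℝ (Fin n)) (i : Fin n) :
    |x i| ≤ ‖x‖ := by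
  have h1 : (x i)^2 ≤ ‖x‖^2 := by
    rw [eucl_norm_sq']
    exact Finset.single_le_sum (f := fun j => (x j)^2) (fun j _ => sq_nonneg _) (Finset.mem_univ i)
  rw [← Real.sqrt_sq_eq_abs, ← Real.sqrt_sq (norm_nonneg x)]
  exact Real.sqrt_le_sqrt h1

private lemma eucl_norm_le_of_coord' {n : ℕ} (x y : EuclideanSpace ℝ (Fin n))
    (h : ∀ i, |x i| ≤ |y i|) : ‖x‖ ≤ ‖y‖ := by
  have h2 : ‖x‖^2 ≤ ‖y‖^2 := by
    rw [eucl_norm_sq', eucl_norm_sq']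
    apply Finset.sum_le_sum
    intro i _
    rw [← sq_abs (x i), ← sq_abs (y i)]
    exact pow_le_pow_left₀ (abs_nonneg _) (h i) 2
  rw [← Real.sqrt_sq (norm_nonneg x), ← Real.sqrt_sq (norm_nonneg y)]
  exact Real.sqrt_le_sqrt h2

private lemma block_integral' {Ω : Type} [mΩ : MeasurableSpace Ω] (μ : Measure Ω)
    (m : MeasurableSpace Ω) (hm : m ≤ mΩ) (B : Set Ω)
    (N : ℕ)
    (hblock : ∀ A : Set Ω, MeasurableSet[m] A → μ (A ∩ B) = μ A / (N : ENNReal))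
    (g : Ω → ℝ) (hg : Measurable[m] g) :
    ∫ ω in B, g ω ∂μ = (N : ℝ)⁻¹ * ∫ ω, g ω ∂μ := by
  have htrim : (μ.restrict B).trim hm = (((N : ENNReal)⁻¹ • μ)).trim hm := by
    apply Measure.ext
    intro s hs
    rw [trim_measurableSet_eq hm hs, trim_measurableSet_eq hm hs,
      Measure.restrict_apply (hm s hs), hblock s hs, Measure.smul_apply, smul_eq_mul,
      ENNReal.div_eq_inv_mul]
  have hgs : StronglyMeasurable[m] g := hg.stronglyMeasurable
  calc ∫ ω in B, g ω ∂μ = ∫ ω, g ω ∂((μ.restrict B).trim hm) := integral_trim hm hgs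
    _ = ∫ ω, g ω ∂(((N : ENNReal)⁻¹ • μ).trim hm) := by rw [htrim]
    _ = ∫ ω, g ω ∂((N : ENNReal)⁻¹ • μ) := (integral_trim hm hgs).symm
    _ = ((N : ENNReal)⁻¹).toReal • ∫ ω, g ω ∂μ := integral_smul_measure _ _
    _ = (N : ℝ)⁻¹ * ∫ ω, g ω ∂μ := by
        rw [smul_eq_mul, ENNReal.toReal_inv]
        norm_num

private lemma decomp_bound' (N : ℕ) (X : ℕ → EuclideanSpace ℝ (Fin N)) (j : Fin N → ℕ) (τ k : ℕ)
    (hjk : ∀ i, j i ≤ k) (hbdd : ∀ i, j i ≤ τ)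
    (xh : EuclideanSpace ℝ (Fin N)) (hxh : ∀ i, xh i = X (k - j i) i) :
    ‖X k - xh‖ ≤ ∑ m ∈ Finset.Ico (k - τ) k, ‖X (m+1) - X m‖ ∧
    ‖xh - X (k - τ)‖ ≤ ∑ m ∈ Finset.Ico (k - τ) k, ‖X (m+1) - X m‖ := by
  constructor
  · set w : ℕ → EuclideanSpace ℝ (Fin N) :=
      fun m => (WithLp.equiv 2 (Fin N → ℝ)).symm (fun i => if k - j i ≤ m then X (m+1) i - X m i else 0) with hwdef
    have hw : ∀ m i, w m i = if k - j i ≤ m then X (m+1) i - X m i else 0 := by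
      intro m i; rfl
    have hsum : X k - xh = ∑ m ∈ Finset.Ico (k-τ) k, w m := by
      apply (WithLp.linearEquiv 2 ℝ (Fin N → ℝ)).injective
      rw [map_sub, map_sum]
      funext i
      rw [Finset.sum_apply]
      show X k i - xh i = ∑ m ∈ Finset.Ico (k-τ) k, w m i
      simp only [hw]
      rw [← Finset.sum_filter]
      have hfil : (Finset.Ico (k-τ) k).filter (fun m => k - j i ≤ m) = Finset.Ico (k - j i) k := by
        ext m
        simp only [Finset.mem_filter, Finset.mem_Ico]
        have h1 := hjk i; have h2 := hbdd i
        omega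
      rw [hfil, telescope_sum' (fun m => X m i) _ _ (Nat.sub_le k (j i)), hxh i]
    rw [hsum]
    refine (norm_sum_le _ _).trans (Finset.sum_le_sum ?_)
    intro m _
    apply eucl_norm_le_of_coord'
    intro i
    rw [hw, PiLp.sub_apply]
    split
    · exact le_refl _
    · simpa using abs_nonneg _
  · set u : ℕ → EuclideanSpace ℝ (Fin N) :=
      fun m => (WithLp.equiv 2 (Fin N → ℝ)).symm (fun i => if m < k - j i then X (m+1) i - X m i else 0) with hudef
    have hu : ∀ m i, u m i = if m < k - j i then X (m+1) i - X m i else 0 := by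
      intro m i; rfl
    have hsum : xh - X (k - τ) = ∑ m ∈ Finset.Ico (k-τ) k, u m := by
      apply (WithLp.linearEquiv 2 ℝ (Fin N → ℝ)).injective
      rw [map_sub, map_sum]
      funext i
      rw [Finset.sum_apply]
      show xh i - X (k-τ) i = ∑ m ∈ Finset.Ico (k-τ) k, u m i
      simp only [hu]
      rw [← Finset.sum_filter]
      have hfil : (Finset.Ico (k-τ) k).filter (fun m => m < k - j i) = Finset.Ico (k - τ) (k - j i) := by
        ext m
        simp only [Finset.mem_filter, Finset.mem_Ico]
        have h1 := hjk i; have h2 := hbdd i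
        omega
      rw [hfil, telescope_sum' (fun m => X m i) _ _ (Nat.sub_le_sub_left (hbdd i) k), hxh i]
    rw [hsum]
    refine (norm_sum_le _ _).trans (Finset.sum_le_sum ?_)
    intro m _
    apply eucl_norm_le_of_coord'
    intro i
    rw [hu, PiLp.sub_apply]
    split
    · exact le_refl _
    · simpa using abs_nonneg _

private lemma BK' (τ k : ℕ) (a : ℕ → ℝ) :
    ∑ i ∈ Finset.Ico (k+1 - τ) (k+1), ((i + τ + 1 - (k+1) : ℕ) : ℝ) * a i
    = (τ:ℝ) * a k + ∑ i ∈ Finset.Ico (k - τ) k, (((i + τ + 1 - k : ℕ) : ℝ) - 1) * a i := by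
  have h1 : ∑ i ∈ Finset.Ico (k+1-τ) (k+1), ((i + τ + 1 - (k+1):ℕ):ℝ) * a i
      = ∑ i ∈ Finset.Ico (k-τ) (k+1), ((i + τ + 1 - (k+1):ℕ):ℝ) * a i := by
    apply Finset.sum_subset (Finset.Ico_subset_Ico (Nat.sub_le_sub_right (Nat.le_succ k) τ) le_rfl) ?_
    intro x hx hx2
    simp only [Finset.mem_Ico] at hx hx2
    have hz : x + τ + 1 - (k+1) = 0 := by omega
    rw [hz]; simp
  rw [h1, Finset.sum_Ico_succ_top (by omega : k - τ ≤ k)]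
  have h2 : ((k + τ + 1 - (k+1) : ℕ):ℝ) = (τ:ℝ) := by congr 1; omega
  rw [h2, add_comm]
  congr 1
  apply Finset.sum_congr rfl
  intro i hi
  simp only [Finset.mem_Ico] at hi
  have hik : k ≤ i + τ := by omega
  have e1 : (i + τ + 1 - (k+1):ℕ) = i + τ - k := by omega
  have e2 : ((i + τ - k:ℕ):ℝ) = ((i:ℝ) + τ) - k := by
    rw [Nat.cast_sub hik]; push_cast; ring
  have e3 : ((i + τ + 1 - k:ℕ):ℝ) = ((i:ℝ) + τ + 1) - k := by
    rw [Nat.cast_sub (by omega)]; push_cast; ring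
  rw [e1, e2, e3]; ring

private lemma young' (a b t : ℝ) (ht : 0 < t) : a * b ≤ t/2 * a^2 + 1/(2*t) * b^2 := by
  have h2 : (0:ℝ) < 2 * t := by linarith
  have key : 2*t*(a*b) ≤ t^2*a^2 + b^2 := by nlinarith [sq_nonneg (t*a - b)]
  calc a*b = (2*t*(a*b))/(2*t) := by field_simp
    _ ≤ (t^2*a^2 + b^2)/(2*t) := by gcongr
    _ = t/2*a^2 + 1/(2*t)*b^2 := by field_simp

end helpers

section ptws2
variable {Nn : ℕ}

private lemma norm_delta_sq (f : EuclideanSpace ℝ (Fin Nn) → ℝ) (L γ : ℝ)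
    (x x' xh : EuclideanSpace ℝ (Fin Nn)) (i0 : Fin Nn)
    (hupd : x' i0 = x i0 - (γ / L) * gradient f xh i0)
    (hfix : ∀ i, i ≠ i0 → x' i = x i) :
    ‖x' - x‖^2 = (γ/L)^2 * (gradient f xh i0)^2 := by
  rw [eucl_norm_sq']
  rw [Finset.sum_eq_single i0]
  · rw [PiLp.sub_apply, hupd]; ring
  · intro i _ hne
    rw [PiLp.sub_apply, hfix i hne]; simp
  · intro h; exact absurd (Finset.mem_univ _) h

private lemma pointwise_descent (f : EuclideanSpace ℝ (Fin Nn) → ℝ) (L γ ε τR : ℝ)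
    (hL : 0 < L) (hγpos : 0 < γ) (hε : 0 < ε) (hτR : 0 < τR)
    (hlip : ∀ y z : EuclideanSpace ℝ (Fin Nn), ‖gradient f y - gradient f z‖ ≤ L * ‖y - z‖)
    (x x' xh : EuclideanSpace ℝ (Fin Nn)) (i0 : Fin Nn)
    (hdl : f x' ≤ f x + ⟪gradient f x, x' - x⟫ + L / 2 * ‖x' - x‖ ^ 2)
    (hupd : x' i0 = x i0 - (γ / L) * gradient f xh i0)
    (hfix : ∀ i, i ≠ i0 → x' i = x i)
    (Sv S2 : ℝ) (hSv : ‖x - xh‖ ≤ Sv) (hSv0 : 0 ≤ Sv) (hS20 : 0 ≤ S2) (hQ : Sv^2 ≤ τR * S2) :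
    f x' + (L/γ - L/2 - L*ε*τR/2) * ‖x' - x‖^2 ≤ f x + L/(2*ε) * S2 := by
  set g := gradient f xh i0 with hgdef
  have hP1 : ‖x' - x‖^2 = (γ/L)^2 * g^2 := norm_delta_sq f L γ x x' xh i0 hupd hfix
  have hΔik : (x' - x) i0 = -(γ/L) * g := by
    rw [PiLp.sub_apply, hupd]; ring
  have hinner : ⟪gradient f x, x' - x⟫ = (gradient f x i0) * ((x' - x) i0) := by
    rw [PiLp.inner_apply]
    rw [Finset.sum_eq_single i0]
    · simp [RCLike.inner_apply, starRingEnd_apply]; ring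
    · intro i _ hne
      rw [PiLp.sub_apply, hfix i hne]
      simp
    · intro h; exact absurd (Finset.mem_univ _) h
  have habs_e : |gradient f x i0 - g| ≤ L * Sv := by
    have h1 : |(gradient f x - gradient f xh) i0| ≤ ‖gradient f x - gradient f xh‖ :=
      eucl_coord_le' _ _
    rw [PiLp.sub_apply] at h1
    exact h1.trans ((hlip _ _).trans (mul_le_mul_of_nonneg_left hSv hL.le))
  have hgsq : (γ/L) * g^2 = (L/γ) * ‖x' - x‖^2 := by
    rw [hP1]; field_simp
  have hΔabs : |(x' - x) i0| ≤ ‖x' - x‖ := eucl_coord_le' _ _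
  have hcross : (gradient f x i0) * ((x' - x) i0) ≤
      -((L/γ) * ‖x' - x‖^2) + (L * Sv) * ‖x' - x‖ := by
    have hsplit : gradient f x i0 = g + (gradient f x i0 - g) := by ring
    set e := gradient f x i0 - g with hedef
    rw [hsplit, hΔik]
    have h1 : (g + e) * (-(γ/L) * g) = -((γ/L) * g^2) + e * (-(γ/L) * g) := by ring
    rw [h1, hgsq]
    have h2 : e * (-(γ/L) * g) ≤ |e| * |(x' - x) i0| := by
      rw [hΔik]
      exact (le_abs_self _).trans (le_of_eq (abs_mul _ _))
    have h3 : |e| * |(x' - x) i0| ≤ (L * Sv) * ‖x' - x‖ :=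
      mul_le_mul habs_e hΔabs (abs_nonneg _) (by positivity)
    linarith
  have hyoung : (L * Sv) * ‖x' - x‖ ≤ L*ε*τR/2 * ‖x' - x‖^2 + L/(2*ε) * S2 := by
    have hy := young' (‖x' - x‖) Sv (ε*τR) (by positivity)
    have h4 : 1/(2*(ε*τR)) * Sv^2 ≤ 1/(2*(ε*τR)) * (τR * S2) :=
      mul_le_mul_of_nonneg_left hQ (by positivity)
    have h5 : 1/(2*(ε*τR)) * (τR * S2) = 1/(2*ε) * S2 := by
      field_simp
    calc (L * Sv) * ‖x' - x‖ = L * (‖x' - x‖ * Sv) := by ring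
      _ ≤ L * (ε*τR/2 * ‖x' - x‖^2 + 1/(2*(ε*τR)) * Sv^2) := mul_le_mul_of_nonneg_left hy hL.le
      _ ≤ L * (ε*τR/2 * ‖x' - x‖^2 + 1/(2*ε) * S2) := by
        have h6 := h4.trans (le_of_eq h5)
        apply mul_le_mul_of_nonneg_left _ hL.le
        linarith
      _ = L*ε*τR/2 * ‖x' - x‖^2 + L/(2*ε) * S2 := by ring
  have hexp : (L/γ - L/2 - L*ε*τR/2) * ‖x' - x‖^2 =
      (L/γ) * ‖x' - x‖^2 - L/2 * ‖x' - x‖^2 - L*ε*τR/2 * ‖x' - x‖^2 := by ring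
  rw [hinner] at hdl
  linarith

private lemma sq_shift_bound (a b L Sv S2 τR : ℝ) (h : a ≤ b + L * Sv) (ha : 0 ≤ a)
    (hL : 0 ≤ L) (hQ : Sv^2 ≤ τR * S2) :
    a^2 ≤ 2*b^2 + 2*L^2*(τR*S2) := by
  have h1 : a^2 ≤ (b + L*Sv)^2 := by
    apply pow_le_pow_left₀ ha h
  have h2 : L^2 * Sv^2 ≤ L^2 * (τR * S2) := mul_le_mul_of_nonneg_left hQ (sq_nonneg L)
  nlinarith [sq_nonneg (b - L*Sv)]

private lemma conv_ptw {E : Type*} [NormedAddCommGroup E] [InnerProductSpace ℝ E] [CompleteSpace E]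
    (f : E → ℝ) (hconv : ConvexOn ℝ Set.univ f) (hdiff : Differentiable ℝ f)
    (x xb : E) : f x - f xb ≤ ‖gradient f x‖ * ‖x - xb‖ := by
  have h := convex_grad_ineq' f hconv hdiff x xb
  have h2 : ⟪gradient f x, xb - x⟫ = -⟪gradient f x, x - xb⟫ := by
    rw [← inner_neg_right]
    congr 1
    abel
  have h3 := real_inner_le_norm (gradient f x) (x - xb)
  rw [h2] at h
  linarith

end ptws2


set_option maxHeartbeats 4000000 in
theorem bounded_stochastic_convex_lemma
    (N : ℕ) (hN : 0 < N)
    (f : EuclideanSpace ℝ (Fin N) → ℝ)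
    (L : ℝ) (hL : 0 < L)
    (hdiff : Differentiable ℝ f)
    (hlip : ∀ y z : EuclideanSpace ℝ (Fin N), ‖gradient f y - gradient f z‖ ≤ L * ‖y - z‖)
    (fmin : ℝ) (hfmin : ∀ y, fmin ≤ f y)
    (Ω : Type) [MeasurableSpace Ω] (μ : Measure Ω) [IsProbabilityMeasure μ]
    (X : ℕ → Ω → EuclideanSpace ℝ (Fin N)) (hXm : ∀ k, Measurable (X k))
    (jv : ℕ → Ω → Fin N → ℕ) (hjvm : ∀ k, Measurable (jv k))
    (hjk : ∀ k ω i, jv k ω i ≤ k)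
    (xhat : ℕ → Ω → EuclideanSpace ℝ (Fin N))
    (hxhat : ∀ k ω i, xhat k ω i = X (k - jv k ω i) ω i)
    (ik : ℕ → Ω → Fin N) (hikm : ∀ k, Measurable (ik k))
    (τ : ℕ) (hτ1 : 1 ≤ τ) (hbdd : ∀ k ω i, jv k ω i ≤ τ)
    (c γ : ℝ) (hc : 0 < c) (hc1 : c < 1) (hγ : γ = 2 * c / (2 * (τ : ℝ) + 1))
    (hupd : ∀ k ω, X (k+1) ω (ik k ω) = X k ω (ik k ω) - (γ / L) * gradient f (xhat k ω) (ik k ω))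
    (hfix : ∀ k ω i, i ≠ ik k ω → X (k+1) ω i = X k ω i)
    (hblock : ∀ k : ℕ, ∀ i : Fin N, ∀ A : Set Ω,
      MeasurableSet[(⨆ l ∈ Finset.range (k - τ + 1), MeasurableSpace.comap (X l) inferInstance) ⊔
        (⨆ l ∈ Finset.range (k - τ + 1), MeasurableSpace.comap (jv l) inferInstance)] A →
      μ (A ∩ {ω | ik k ω = i}) = μ A / (N : ENNReal))
    (hIf : ∀ k, Integrable (fun ω => f (X k ω)) μ)
    (hID2 : ∀ k, Integrable (fun ω => ‖X (k+1) ω - X k ω‖ ^ 2) μ)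
    (hIg : ∀ k, Integrable (fun ω => ‖gradient f (X k ω)‖) μ)
    (hIg2 : ∀ k, Integrable (fun ω => ‖gradient f (X k ω)‖ ^ 2) μ)
    (hconv : ConvexOn ℝ Set.univ f)
    (xstar : EuclideanSpace ℝ (Fin N)) (hxstar : ∀ y, f xstar ≤ f y)
    (xbar : ℕ → Ω → EuclideanSpace ℝ (Fin N))
    (hxbar : ∀ k ω, (∀ y, f (xbar k ω) ≤ f y) ∧
      ‖X k ω - xbar k ω‖ = Metric.infDist (X k ω) {z | ∀ y, f z ≤ f y})
    (hIxbar : ∀ k, Integrable (fun ω => ‖X k ω - xbar k ω‖ ^ 2) μ)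
    (ε : ℝ) (hε : 0 < ε) (hεeq : ε + 1 / ε = 1 + (1 / (τ : ℝ)) * (1 / γ - 1 / 2))
    (δ : ℝ) (hδ : δ = (1 + (ε / (2 * (τ : ℝ))) * (1 / γ - 1 / 2 - (τ : ℝ))) * (L / (2 * ε)))
    (β : ℝ) (hβ : β = max (8 * (N : ℝ) * L ^ 2 / γ ^ 2) ((12 * (N : ℝ) + 2) * L ^ 2 * (τ : ℝ) + δ * (τ : ℝ)))
    (α : ℝ) (hα : α = β / ((L / (4 * (τ : ℝ))) * (1 / γ - 1 / 2 - (τ : ℝ))))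
    (π ES : ℕ → ℝ)
    (hπ : ∀ k, π k = (∫ ω, (f (X k ω) + δ *
      ∑ i ∈ Finset.Ico (k - τ) k, ((i + τ + 1 - k : ℕ) : ℝ) * ‖X (i+1) ω - X i ω‖ ^ 2) ∂μ) - f xstar)
    (hES : ∀ k, ES k = ∫ ω, (∑ i ∈ Finset.Ico (k - τ) k, δ * ‖X (i+1) ω - X i ω‖ ^ 2) ∂μ) :
    ∀ k : ℕ,
      (π k) ^ 2 ≤ α * (π k - π (k+1)) * ((τ : ℝ) * ES k + ∫ ω, ‖X k ω - xbar k ω‖ ^ 2 ∂μ) := by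
  -- scalar preliminaries
  have hτR : (0:ℝ) < τ := by exact_mod_cast hτ1
  have hγpos : 0 < γ := by rw [hγ]; positivity
  have hgval : 1/γ - 1/2 = (τ:ℝ) * (ε + 1/ε - 1) := by
    field_simp at hεeq ⊢
    nlinarith [hεeq]
  have hεne1 : ε ≠ 1 := by
    intro h
    rw [h] at hgval
    rw [hγ] at hgval
    have h2c : (2*c) ≠ 0 := by positivity
    field_simp at hgval
    nlinarith
  have hsq : 0 < (ε-1)^2 := (sq_nonneg _).lt_of_ne' (pow_ne_zero 2 (sub_ne_zero.mpr hεne1))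
  have hDc : 1/γ - 1/2 - (τ:ℝ) = (τ:ℝ) * (ε-1)^2 / ε := by
    rw [hgval]; field_simp; ring
  have hDcpos : 0 < 1/γ - 1/2 - (τ:ℝ) := by
    rw [hDc]; exact div_pos (mul_pos hτR hsq) hε
  have hδval : δ = L * (ε^2 - 2*ε + 3) / (4*ε) := by
    rw [hδ, hDc]; field_simp; ring
  have hδpos : 0 < δ := by
    rw [hδval]
    have h3 : 0 < ε^2 - 2*ε + 3 := by nlinarith
    positivity
  set Dc : ℝ := 1/γ - 1/2 - (τ:ℝ) with hDcdef
  have c1 : L*(1/γ - 1/2) - L*ε*(τ:ℝ)/2 - δ*(τ:ℝ) = L*Dc/4 := by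
    rw [hDcdef, hgval, hδval]
    field_simp
    ring
  have c2 : δ - L/(2*ε) = L*Dc/(4*(τ:ℝ)) := by
    rw [hDcdef, hδval, hgval]
    field_simp
    ring
  have hβ1 : 8 * (N : ℝ) * L ^ 2 / γ ^ 2 ≤ β := by rw [hβ]; exact le_max_left _ _
  have hβ2 : (12 * (N : ℝ) + 2) * L ^ 2 * (τ : ℝ) + δ * (τ : ℝ) ≤ β := by rw [hβ]; exact le_max_right _ _
  have hβpos : 0 < β := by
    refine lt_of_lt_of_le ?_ hβ2
    have : 0 < (12 * (N : ℝ) + 2) := by positivity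
    positivity
  have hαval : α * (L*Dc/(4*(τ:ℝ))) = β := by
    have hne : L*Dc/(4*(τ:ℝ)) ≠ 0 := by
      apply ne_of_gt
      apply div_pos (mul_pos hL hDcpos) (by positivity)
    have he : (L / (4 * (τ:ℝ))) * Dc = L*Dc/(4*(τ:ℝ)) := by ring
    rw [hα, he, div_mul_cancel₀ _ hne]
  have hαpos : 0 < α := by
    rw [hα]
    apply div_pos hβpos (mul_pos (by positivity) hDcpos)
  -- continuity facts
  have hgc : Continuous (gradient f) := grad_continuous' f L hL.le hlip
  intro k
  set S : Finset ℕ := Finset.Ico (k - τ) k with hSdef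
  have hEΔnn : ∀ m : ℕ, 0 ≤ ∫ ω, ‖X (m+1) ω - X m ω‖^2 ∂μ :=
    fun m => integral_nonneg (fun ω => by positivity)
  have hScard : (S.card : ℝ) ≤ (τ:ℝ) := by
    rw [hSdef, Nat.card_Ico]
    exact_mod_cast (by omega : k - (k - τ) ≤ τ)
  have hIS2 : Integrable (fun ω => ∑ m ∈ S, ‖X (m+1) ω - X m ω‖^2) μ :=
    integrable_finset_sum _ (fun m _ => hID2 m)
  have P1 : ∀ ω, ‖X (k+1) ω - X k ω‖^2 = (γ/L)^2 * (gradient f (xhat k ω) (ik k ω))^2 :=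
    fun ω => norm_delta_sq f L γ (X k ω) (X (k+1) ω) (xhat k ω) (ik k ω) (hupd k ω)
      (fun i hi => hfix k ω i hi)
  have P2 : ∀ ω, ‖X k ω - xhat k ω‖ ≤ ∑ m ∈ S, ‖X (m+1) ω - X m ω‖ := fun ω =>
    (decomp_bound' N (fun l => X l ω) (jv k ω) τ k (hjk k ω) (hbdd k ω) (xhat k ω) (hxhat k ω)).1
  have P3 : ∀ ω, ‖xhat k ω - X (k-τ) ω‖ ≤ ∑ m ∈ S, ‖X (m+1) ω - X m ω‖ := fun ω =>
    (decomp_bound' N (fun l => X l ω) (jv k ω) τ k (hjk k ω) (hbdd k ω) (xhat k ω) (hxhat k ω)).2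
  have P3' : ∀ ω, ‖X k ω - X (k-τ) ω‖ ≤ ∑ m ∈ S, ‖X (m+1) ω - X m ω‖ := by
    intro ω
    have ht : X k ω - X (k-τ) ω = ∑ m ∈ S, (X (m+1) ω - X m ω) :=
      (telescope_sum' (fun m => X m ω) _ _ (Nat.sub_le k τ)).symm
    rw [ht]; exact norm_sum_le _ _
  have hSnn : ∀ ω, 0 ≤ ∑ m ∈ S, ‖X (m+1) ω - X m ω‖ :=
    fun ω => Finset.sum_nonneg fun m _ => norm_nonneg _
  have hS2nn : ∀ ω, 0 ≤ ∑ m ∈ S, ‖X (m+1) ω - X m ω‖^2 :=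
    fun ω => Finset.sum_nonneg fun m _ => sq_nonneg _
  have Q1 : ∀ ω, (∑ m ∈ S, ‖X (m+1) ω - X m ω‖)^2 ≤ (τ:ℝ) * ∑ m ∈ S, ‖X (m+1) ω - X m ω‖^2 := by
    intro ω
    refine (sq_sum_le_card_mul_sum_sq (s := S) (f := fun m => ‖X (m+1) ω - X m ω‖)).trans ?_
    exact mul_le_mul_of_nonneg_right hScard (hS2nn ω)
  have P45 : ∀ ω, f (X (k+1) ω) + (L/γ - L/2 - L*ε*(τ:ℝ)/2) * ‖X (k+1) ω - X k ω‖^2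
      ≤ f (X k ω) + L/(2*ε) * ∑ m ∈ S, ‖X (m+1) ω - X m ω‖^2 := by
    intro ω
    exact pointwise_descent f L γ ε (τ:ℝ) hL hγpos hε hτR hlip (X k ω) (X (k+1) ω) (xhat k ω)
      (ik k ω) (descent_lemma' f L hL hdiff hlip (X k ω) (X (k+1) ω)) (hupd k ω)
      (fun i hi => hfix k ω i hi) _ _ (P2 ω) (hSnn ω) (hS2nn ω) (Q1 ω)
  -- descent, in expectation
  have hIWk : Integrable (fun ω => f (X k ω)
      + δ * ∑ i ∈ S, ((i + τ + 1 - k:ℕ):ℝ) * ‖X (i+1) ω - X i ω‖^2) μ :=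
    (hIf k).add ((integrable_finset_sum _ fun i _ => (hID2 i).const_mul _).const_mul δ)
  have hIWk1 : Integrable (fun ω => f (X (k+1) ω)
      + δ * ∑ i ∈ Finset.Ico (k+1-τ) (k+1), ((i + τ + 1 - (k+1):ℕ):ℝ) * ‖X (i+1) ω - X i ω‖^2) μ :=
    (hIf (k+1)).add ((integrable_finset_sum _ fun i _ => (hID2 i).const_mul _).const_mul δ)
  have hdesc : (L*Dc/(4*(τ:ℝ))) * ((τ:ℝ) * (∫ ω, ‖X (k+1) ω - X k ω‖^2 ∂μ)
      + ∑ m ∈ S, ∫ ω, ‖X (m+1) ω - X m ω‖^2 ∂μ) ≤ π k - π (k+1) := by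
    have hc1' : L/γ - L/2 - L*ε*(τ:ℝ)/2 - δ*(τ:ℝ) = L*Dc/4 := by rw [← c1]; ring
    have hpt : ∀ ω, (L*Dc/4) * ‖X (k+1) ω - X k ω‖^2
        + (L*Dc/(4*(τ:ℝ))) * ∑ m ∈ S, ‖X (m+1) ω - X m ω‖^2
        ≤ (f (X k ω) + δ * ∑ i ∈ S, ((i + τ + 1 - k:ℕ):ℝ) * ‖X (i+1) ω - X i ω‖^2)
          - (f (X (k+1) ω) + δ * ∑ i ∈ Finset.Ico (k+1-τ) (k+1),
              ((i + τ + 1 - (k+1):ℕ):ℝ) * ‖X (i+1) ω - X i ω‖^2) := by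
      intro ω
      have hBK := BK' τ k (fun i => ‖X (i+1) ω - X i ω‖^2)
      rw [← hSdef] at hBK
      have hsub : ∑ i ∈ S, (((i + τ + 1 - k:ℕ):ℝ) - 1) * ‖X (i+1) ω - X i ω‖^2
          = (∑ i ∈ S, ((i + τ + 1 - k:ℕ):ℝ) * ‖X (i+1) ω - X i ω‖^2)
            - ∑ i ∈ S, ‖X (i+1) ω - X i ω‖^2 := by
        rw [← Finset.sum_sub_distrib]
        exact Finset.sum_congr rfl fun i _ => by ring
      have e1 : δ * (∑ i ∈ Finset.Ico (k+1-τ) (k+1),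
            ((i + τ + 1 - (k+1):ℕ):ℝ) * ‖X (i+1) ω - X i ω‖^2)
          = δ*(τ:ℝ) * ‖X (k+1) ω - X k ω‖^2
            + δ * (∑ i ∈ S, ((i+τ+1-k:ℕ):ℝ) * ‖X (i+1) ω - X i ω‖^2)
            - δ * ∑ i ∈ S, ‖X (i+1) ω - X i ω‖^2 := by
        rw [hBK, hsub]; ring
      have h45 := P45 ω
      have e2 : (L/γ - L/2 - L*ε*(τ:ℝ)/2) * ‖X (k+1) ω - X k ω‖^2
          - δ*(τ:ℝ) * ‖X (k+1) ω - X k ω‖^2 = (L*Dc/4) * ‖X (k+1) ω - X k ω‖^2 := by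
        rw [← hc1']; ring
      have e3 : δ * (∑ i ∈ S, ‖X (i+1) ω - X i ω‖^2)
          - L/(2*ε) * (∑ i ∈ S, ‖X (i+1) ω - X i ω‖^2)
          = (L*Dc/(4*(τ:ℝ))) * ∑ i ∈ S, ‖X (i+1) ω - X i ω‖^2 := by
        rw [← c2]; ring
      linarith only [h45, e1, e2, e3]
    have hIL : Integrable (fun ω => (L*Dc/4) * ‖X (k+1) ω - X k ω‖^2
        + (L*Dc/(4*(τ:ℝ))) * ∑ m ∈ S, ‖X (m+1) ω - X m ω‖^2) μ :=
      ((hID2 k).const_mul _).add (hIS2.const_mul _)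
    have hmono : (L*Dc/4) * (∫ ω, ‖X (k+1) ω - X k ω‖^2 ∂μ)
        + (L*Dc/(4*(τ:ℝ))) * ∑ m ∈ S, ∫ ω, ‖X (m+1) ω - X m ω‖^2 ∂μ
        ≤ (∫ ω, (f (X k ω) + δ * ∑ i ∈ S, ((i + τ + 1 - k:ℕ):ℝ) * ‖X (i+1) ω - X i ω‖^2) ∂μ)
          - ∫ ω, (f (X (k+1) ω) + δ * ∑ i ∈ Finset.Ico (k+1-τ) (k+1),
              ((i + τ + 1 - (k+1):ℕ):ℝ) * ‖X (i+1) ω - X i ω‖^2) ∂μ := by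
      have hm0 := integral_mono hIL (hIWk.sub hIWk1) hpt
      have hm : (∫ ω, ((L*Dc/4) * ‖X (k+1) ω - X k ω‖^2
          + (L*Dc/(4*(τ:ℝ))) * ∑ m ∈ S, ‖X (m+1) ω - X m ω‖^2) ∂μ)
          ≤ ∫ ω, ((f (X k ω) + δ * ∑ i ∈ S, ((i + τ + 1 - k:ℕ):ℝ) * ‖X (i+1) ω - X i ω‖^2)
            - (f (X (k+1) ω) + δ * ∑ i ∈ Finset.Ico (k+1-τ) (k+1),
                ((i + τ + 1 - (k+1):ℕ):ℝ) * ‖X (i+1) ω - X i ω‖^2)) ∂μ := hm0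
      have hR : (∫ ω, ((f (X k ω) + δ * ∑ i ∈ S, ((i + τ + 1 - k:ℕ):ℝ) * ‖X (i+1) ω - X i ω‖^2)
          - (f (X (k+1) ω) + δ * ∑ i ∈ Finset.Ico (k+1-τ) (k+1),
              ((i + τ + 1 - (k+1):ℕ):ℝ) * ‖X (i+1) ω - X i ω‖^2)) ∂μ)
          = (∫ ω, (f (X k ω) + δ * ∑ i ∈ S, ((i + τ + 1 - k:ℕ):ℝ) * ‖X (i+1) ω - X i ω‖^2) ∂μ)
          - ∫ ω, (f (X (k+1) ω) + δ * ∑ i ∈ Finset.Ico (k+1-τ) (k+1),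
              ((i + τ + 1 - (k+1):ℕ):ℝ) * ‖X (i+1) ω - X i ω‖^2) ∂μ := integral_sub hIWk hIWk1
      have hL1 : (∫ ω, ((L*Dc/4) * ‖X (k+1) ω - X k ω‖^2
          + (L*Dc/(4*(τ:ℝ))) * ∑ m ∈ S, ‖X (m+1) ω - X m ω‖^2) ∂μ)
          = (∫ ω, (L*Dc/4) * ‖X (k+1) ω - X k ω‖^2 ∂μ)
            + ∫ ω, (L*Dc/(4*(τ:ℝ))) * ∑ m ∈ S, ‖X (m+1) ω - X m ω‖^2 ∂μ :=
        integral_add ((hID2 k).const_mul _) (hIS2.const_mul _)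
      have hL2 : (∫ ω, (L*Dc/4) * ‖X (k+1) ω - X k ω‖^2 ∂μ)
          = (L*Dc/4) * ∫ ω, ‖X (k+1) ω - X k ω‖^2 ∂μ := integral_const_mul _ _
      have hL3 : (∫ ω, (L*Dc/(4*(τ:ℝ))) * ∑ m ∈ S, ‖X (m+1) ω - X m ω‖^2 ∂μ)
          = (L*Dc/(4*(τ:ℝ))) * ∫ ω, ∑ m ∈ S, ‖X (m+1) ω - X m ω‖^2 ∂μ := integral_const_mul _ _
      have hL4 : (∫ ω, ∑ m ∈ S, ‖X (m+1) ω - X m ω‖^2 ∂μ)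
          = ∑ m ∈ S, ∫ ω, ‖X (m+1) ω - X m ω‖^2 ∂μ :=
        integral_finset_sum _ (fun m _ => hID2 m)
      rw [hR, hL1, hL2, hL3, hL4] at hm
      exact hm
    have hπk := hπ k
    have hπk1 := hπ (k+1)
    rw [← hSdef] at hπk
    have heq : L*Dc/(4*(τ:ℝ)) * ((τ:ℝ) * ∫ ω, ‖X (k+1) ω - X k ω‖^2 ∂μ)
        = L*Dc/4 * ∫ ω, ‖X (k+1) ω - X k ω‖^2 ∂μ := by
      field_simp
    have hmul : L*Dc/(4*(τ:ℝ)) * ((τ:ℝ) * (∫ ω, ‖X (k+1) ω - X k ω‖^2 ∂μ)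
        + ∑ m ∈ S, ∫ ω, ‖X (m+1) ω - X m ω‖^2 ∂μ)
        = L*Dc/(4*(τ:ℝ)) * ((τ:ℝ) * ∫ ω, ‖X (k+1) ω - X k ω‖^2 ∂μ)
          + L*Dc/(4*(τ:ℝ)) * ∑ m ∈ S, ∫ ω, ‖X (m+1) ω - X m ω‖^2 ∂μ := by ring
    rw [hπk, hπk1]
    linarith only [hmono, heq, hmul]
  -- convexity and Cauchy-Schwarz
  have hgm : Measurable fun ω => ‖gradient f (X k ω)‖ := (hgc.measurable.comp (hXm k)).norm
  have hdm : AEStronglyMeasurable (fun ω => ‖X k ω - xbar k ω‖) μ := by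
    have h1 : (fun ω => ‖X k ω - xbar k ω‖) = fun ω => Real.sqrt (‖X k ω - xbar k ω‖^2) := by
      funext ω; rw [Real.sqrt_sq (norm_nonneg _)]
    rw [h1]
    exact Real.continuous_sqrt.comp_aestronglyMeasurable (hIxbar k).aestronglyMeasurable
  have hPm : AEStronglyMeasurable (fun ω => ‖gradient f (X k ω)‖ * ‖X k ω - xbar k ω‖) μ :=
    hgm.aestronglyMeasurable.mul hdm
  have hIP : Integrable (fun ω => ‖gradient f (X k ω)‖ * ‖X k ω - xbar k ω‖) μ := by
    apply Integrable.mono' (((hIg2 k).add (hIxbar k)).div_const 2) hPm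
    filter_upwards with ω
    have hnn : 0 ≤ ‖gradient f (X k ω)‖ * ‖X k ω - xbar k ω‖ := by positivity
    show ‖‖gradient f (X k ω)‖ * ‖X k ω - xbar k ω‖‖
      ≤ (‖gradient f (X k ω)‖^2 + ‖X k ω - xbar k ω‖^2)/2
    rw [Real.norm_eq_abs, abs_of_nonneg hnn]
    have h2 := sq_nonneg (‖gradient f (X k ω)‖ - ‖X k ω - xbar k ω‖)
    nlinarith [h2]
  have hPnn : 0 ≤ ∫ ω, ‖gradient f (X k ω)‖ * ‖X k ω - xbar k ω‖ ∂μ :=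
    integral_nonneg fun ω => by positivity
  have hAnn : 0 ≤ ∫ ω, ‖gradient f (X k ω)‖^2 ∂μ := integral_nonneg fun ω => sq_nonneg _
  have hBnn : 0 ≤ ∫ ω, ‖X k ω - xbar k ω‖^2 ∂μ := integral_nonneg fun ω => sq_nonneg _
  have hfbar : ∀ ω, f (xbar k ω) = f xstar :=
    fun ω => le_antisymm ((hxbar k ω).1 xstar) (hxstar _)
  have hC1 : (∫ ω, f (X k ω) ∂μ) - f xstar
      ≤ ∫ ω, ‖gradient f (X k ω)‖ * ‖X k ω - xbar k ω‖ ∂μ := by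
    have hpt : ∀ ω, f (X k ω) - f xstar ≤ ‖gradient f (X k ω)‖ * ‖X k ω - xbar k ω‖ := by
      intro ω
      have h := conv_ptw f hconv hdiff (X k ω) (xbar k ω)
      rw [hfbar ω] at h
      exact h
    have h2 : (∫ ω, (f (X k ω) - f xstar) ∂μ)
        ≤ ∫ ω, ‖gradient f (X k ω)‖ * ‖X k ω - xbar k ω‖ ∂μ :=
      integral_mono ((hIf k).sub (integrable_const (f xstar))) hIP hpt
    have h3 : (∫ ω, (f (X k ω) - f xstar) ∂μ)
        = (∫ ω, f (X k ω) ∂μ) - ∫ (_ : Ω), f xstar ∂μ :=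
      integral_sub (hIf k) (integrable_const _)
    rw [h3, integral_const, probReal_univ, one_smul] at h2
    exact h2
  have hC4 : 2 * ∫ ω, ‖gradient f (X k ω)‖ * ‖X k ω - xbar k ω‖ ∂μ
      ≤ (∫ ω, ‖gradient f (X k ω)‖^2 ∂μ) + ∫ ω, ‖X k ω - xbar k ω‖^2 ∂μ := by
    have hpt : ∀ ω, 2 * (‖gradient f (X k ω)‖ * ‖X k ω - xbar k ω‖)
        ≤ ‖gradient f (X k ω)‖^2 + ‖X k ω - xbar k ω‖^2 := by
      intro ω; nlinarith [sq_nonneg (‖gradient f (X k ω)‖ - ‖X k ω - xbar k ω‖), sq_nonneg (‖gradient f (X k ω)‖ + ‖X k ω - xbar k ω‖)]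
    have h2 : (∫ ω, 2 * (‖gradient f (X k ω)‖ * ‖X k ω - xbar k ω‖) ∂μ)
        ≤ ∫ ω, (‖gradient f (X k ω)‖^2 + ‖X k ω - xbar k ω‖^2) ∂μ :=
      integral_mono (hIP.const_mul 2) ((hIg2 k).add (hIxbar k)) hpt
    have h3 : (∫ ω, 2 * (‖gradient f (X k ω)‖ * ‖X k ω - xbar k ω‖) ∂μ)
        = 2 * ∫ ω, ‖gradient f (X k ω)‖ * ‖X k ω - xbar k ω‖ ∂μ := integral_const_mul _ _
    have h4 : (∫ ω, (‖gradient f (X k ω)‖^2 + ‖X k ω - xbar k ω‖^2) ∂μ)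
        = (∫ ω, ‖gradient f (X k ω)‖^2 ∂μ) + ∫ ω, ‖X k ω - xbar k ω‖^2 ∂μ :=
      integral_add (hIg2 k) (hIxbar k)
    rw [h3, h4] at h2
    exact h2
  have hC5 : (∫ ω, ‖gradient f (X k ω)‖ * ‖X k ω - xbar k ω‖ ∂μ)^2
      ≤ (∫ ω, ‖gradient f (X k ω)‖^2 ∂μ) * ∫ ω, ‖X k ω - xbar k ω‖^2 ∂μ := by
    have hq : ∀ t : ℝ, 0 ≤ (∫ ω, ‖gradient f (X k ω)‖^2 ∂μ) * (t*t)
        + (2 * ∫ ω, ‖gradient f (X k ω)‖ * ‖X k ω - xbar k ω‖ ∂μ) * t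
        + ∫ ω, ‖X k ω - xbar k ω‖^2 ∂μ := by
      intro t
      have hpt : ∀ ω, (0:ℝ) ≤ t^2 * ‖gradient f (X k ω)‖^2
          + (2*t) * (‖gradient f (X k ω)‖ * ‖X k ω - xbar k ω‖) + ‖X k ω - xbar k ω‖^2 := by
        intro ω
        nlinarith only [sq_nonneg (t * ‖gradient f (X k ω)‖ + ‖X k ω - xbar k ω‖)]
      have h0 : (0:ℝ) ≤ ∫ ω, (t^2 * ‖gradient f (X k ω)‖^2
          + (2*t) * (‖gradient f (X k ω)‖ * ‖X k ω - xbar k ω‖) + ‖X k ω - xbar k ω‖^2) ∂μ :=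
        integral_nonneg hpt
      have e1 : (∫ ω, (t^2 * ‖gradient f (X k ω)‖^2
          + (2*t) * (‖gradient f (X k ω)‖ * ‖X k ω - xbar k ω‖) + ‖X k ω - xbar k ω‖^2) ∂μ)
          = (∫ ω, (t^2 * ‖gradient f (X k ω)‖^2
            + (2*t) * (‖gradient f (X k ω)‖ * ‖X k ω - xbar k ω‖)) ∂μ)
            + ∫ ω, ‖X k ω - xbar k ω‖^2 ∂μ :=
        integral_add (((hIg2 k).const_mul _).add (hIP.const_mul _)) (hIxbar k)
      have e2 : (∫ ω, (t^2 * ‖gradient f (X k ω)‖^2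
          + (2*t) * (‖gradient f (X k ω)‖ * ‖X k ω - xbar k ω‖)) ∂μ)
          = (∫ ω, t^2 * ‖gradient f (X k ω)‖^2 ∂μ)
            + ∫ ω, (2*t) * (‖gradient f (X k ω)‖ * ‖X k ω - xbar k ω‖) ∂μ :=
        integral_add ((hIg2 k).const_mul _) (hIP.const_mul _)
      have e3 : (∫ ω, t^2 * ‖gradient f (X k ω)‖^2 ∂μ)
          = t^2 * ∫ ω, ‖gradient f (X k ω)‖^2 ∂μ := integral_const_mul _ _
      have e4 : (∫ ω, (2*t) * (‖gradient f (X k ω)‖ * ‖X k ω - xbar k ω‖) ∂μ)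
          = (2*t) * ∫ ω, ‖gradient f (X k ω)‖ * ‖X k ω - xbar k ω‖ ∂μ := integral_const_mul _ _
      rw [e1, e2, e3, e4] at h0
      nlinarith only [h0]
    have hd := discrim_le_zero hq
    rw [discrim] at hd
    nlinarith only [hd]
  -- pi identities
  have hWint : ∫ ω, (δ * ∑ i ∈ S, ((i + τ + 1 - k:ℕ):ℝ) * ‖X (i+1) ω - X i ω‖^2) ∂μ
      = δ * ∑ i ∈ S, ((i + τ + 1 - k:ℕ):ℝ) * ∫ ω, ‖X (i+1) ω - X i ω‖^2 ∂μ := by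
    have e1 : (∫ ω, (δ * ∑ i ∈ S, ((i + τ + 1 - k:ℕ):ℝ) * ‖X (i+1) ω - X i ω‖^2) ∂μ)
        = δ * ∫ ω, (∑ i ∈ S, ((i + τ + 1 - k:ℕ):ℝ) * ‖X (i+1) ω - X i ω‖^2) ∂μ :=
      integral_const_mul _ _
    have e2 : (∫ ω, (∑ i ∈ S, ((i + τ + 1 - k:ℕ):ℝ) * ‖X (i+1) ω - X i ω‖^2) ∂μ)
        = ∑ i ∈ S, ∫ ω, ((i + τ + 1 - k:ℕ):ℝ) * ‖X (i+1) ω - X i ω‖^2 ∂μ :=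
      integral_finset_sum _ (fun i _ => (hID2 i).const_mul _)
    rw [e1, e2]
    congr 1
    exact Finset.sum_congr rfl fun i _ => integral_const_mul _ _
  have hπsplit : π k = ((∫ ω, f (X k ω) ∂μ) - f xstar)
      + δ * ∑ i ∈ S, ((i + τ + 1 - k:ℕ):ℝ) * ∫ ω, ‖X (i+1) ω - X i ω‖^2 ∂μ := by
    have h1 := hπ k
    rw [← hSdef] at h1
    rw [h1, integral_add (hIf k)
      ((integrable_finset_sum _ fun i _ => (hID2 i).const_mul _).const_mul δ), hWint]
    ring
  have hESval : ES k = δ * ∑ m ∈ S, ∫ ω, ‖X (m+1) ω - X m ω‖^2 ∂μ := by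
    have h1 := hES k
    rw [← hSdef] at h1
    have e1 : (∫ ω, (∑ i ∈ S, δ * ‖X (i+1) ω - X i ω‖^2) ∂μ)
        = ∑ i ∈ S, ∫ ω, δ * ‖X (i+1) ω - X i ω‖^2 ∂μ :=
      integral_finset_sum _ (fun i _ => (hID2 i).const_mul δ)
    rw [h1, e1, Finset.mul_sum]
    exact Finset.sum_congr rfl fun i _ => integral_const_mul _ _
  have hESnn : 0 ≤ ES k := by
    rw [hESval]
    exact mul_nonneg hδpos.le (Finset.sum_nonneg fun m _ => hEΔnn m)
  have hπle : π k ≤ (∫ ω, ‖gradient f (X k ω)‖ * ‖X k ω - xbar k ω‖ ∂μ) + (τ:ℝ) * ES k := by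
    rw [hπsplit]
    have h2 : ∑ i ∈ S, ((i + τ + 1 - k:ℕ):ℝ) * ∫ ω, ‖X (i+1) ω - X i ω‖^2 ∂μ
        ≤ ∑ i ∈ S, (τ:ℝ) * ∫ ω, ‖X (i+1) ω - X i ω‖^2 ∂μ := by
      apply Finset.sum_le_sum
      intro i hi
      apply mul_le_mul_of_nonneg_right _ (hEΔnn i)
      have hile : i + τ + 1 - k ≤ τ := by
        rw [hSdef] at hi
        simp only [Finset.mem_Ico] at hi
        omega
      exact_mod_cast hile
    have hcoef : δ * ∑ i ∈ S, ((i + τ + 1 - k:ℕ):ℝ) * ∫ ω, ‖X (i+1) ω - X i ω‖^2 ∂μ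
        ≤ (τ:ℝ) * ES k := by
      rw [hESval]
      calc δ * ∑ i ∈ S, ((i + τ + 1 - k:ℕ):ℝ) * ∫ ω, ‖X (i+1) ω - X i ω‖^2 ∂μ
          ≤ δ * ∑ i ∈ S, (τ:ℝ) * ∫ ω, ‖X (i+1) ω - X i ω‖^2 ∂μ :=
            mul_le_mul_of_nonneg_left h2 hδpos.le
        _ = (τ:ℝ) * (δ * ∑ m ∈ S, ∫ ω, ‖X (m+1) ω - X m ω‖^2 ∂μ) := by
            rw [← Finset.mul_sum]
            ring
    linarith only [hC1, hcoef]
  have hπnn : 0 ≤ π k := by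
    rw [hπsplit]
    have h1 : f xstar ≤ ∫ ω, f (X k ω) ∂μ := by
      have h2 := integral_mono (integrable_const (f xstar)) (hIf k) (fun ω => hxstar (X k ω))
      rwa [integral_const, probReal_univ, one_smul] at h2
    have h3 : 0 ≤ δ * ∑ i ∈ S, ((i + τ + 1 - k:ℕ):ℝ) * ∫ ω, ‖X (i+1) ω - X i ω‖^2 ∂μ :=
      mul_nonneg hδpos.le (Finset.sum_nonneg fun i _ =>
        mul_nonneg (by positivity) (hEΔnn i))
    linarith only [h1, h3]
  -- gradient norm bound
  have hGpt : ∀ ω, ‖gradient f (X k ω)‖^2 ≤ 2*‖gradient f (X (k-τ) ω)‖^2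
      + 2*L^2*((τ:ℝ) * ∑ m ∈ S, ‖X (m+1) ω - X m ω‖^2) := by
    intro ω
    apply sq_shift_bound _ _ L (∑ m ∈ S, ‖X (m+1) ω - X m ω‖) _ (τ:ℝ) _ (norm_nonneg _)
      hL.le (Q1 ω)
    have h1 : ‖gradient f (X k ω)‖ - ‖gradient f (X (k-τ) ω)‖
        ≤ ‖gradient f (X k ω) - gradient f (X (k-τ) ω)‖ := norm_sub_norm_le _ _
    have h2 := (hlip (X k ω) (X (k-τ) ω)).trans
      (mul_le_mul_of_nonneg_left (P3' ω) hL.le)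
    linarith only [h1, h2]
  have hIg2R : Integrable (fun ω => 2*‖gradient f (X (k-τ) ω)‖^2
      + 2*L^2*((τ:ℝ) * ∑ m ∈ S, ‖X (m+1) ω - X m ω‖^2)) μ :=
    ((hIg2 (k-τ)).const_mul 2).add ((hIS2.const_mul _).const_mul _)
  have hA1 : (∫ ω, ‖gradient f (X k ω)‖^2 ∂μ) ≤ 2 * (∫ ω, ‖gradient f (X (k-τ) ω)‖^2 ∂μ)
      + 2*L^2*((τ:ℝ) * ∑ m ∈ S, ∫ ω, ‖X (m+1) ω - X m ω‖^2 ∂μ) := by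
    have hm0 := integral_mono (hIg2 k) hIg2R hGpt
    have hm : (∫ ω, ‖gradient f (X k ω)‖^2 ∂μ)
        ≤ ∫ ω, (2*‖gradient f (X (k-τ) ω)‖^2
          + 2*L^2*((τ:ℝ) * ∑ m ∈ S, ‖X (m+1) ω - X m ω‖^2)) ∂μ := hm0
    have e1 : (∫ ω, (2*‖gradient f (X (k-τ) ω)‖^2
        + 2*L^2*((τ:ℝ) * ∑ m ∈ S, ‖X (m+1) ω - X m ω‖^2)) ∂μ)
        = (∫ ω, 2*‖gradient f (X (k-τ) ω)‖^2 ∂μ)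
          + ∫ ω, 2*L^2*((τ:ℝ) * ∑ m ∈ S, ‖X (m+1) ω - X m ω‖^2) ∂μ :=
      integral_add ((hIg2 (k-τ)).const_mul 2) ((hIS2.const_mul _).const_mul _)
    have e2 : (∫ ω, 2*‖gradient f (X (k-τ) ω)‖^2 ∂μ)
        = 2 * ∫ ω, ‖gradient f (X (k-τ) ω)‖^2 ∂μ := integral_const_mul _ _
    have e3 : (∫ ω, 2*L^2*((τ:ℝ) * ∑ m ∈ S, ‖X (m+1) ω - X m ω‖^2) ∂μ)
        = 2*L^2* ∫ ω, ((τ:ℝ) * ∑ m ∈ S, ‖X (m+1) ω - X m ω‖^2) ∂μ := integral_const_mul _ _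
    have e4 : (∫ ω, ((τ:ℝ) * ∑ m ∈ S, ‖X (m+1) ω - X m ω‖^2) ∂μ)
        = (τ:ℝ) * ∫ ω, (∑ m ∈ S, ‖X (m+1) ω - X m ω‖^2) ∂μ := integral_const_mul _ _
    have e5 : (∫ ω, (∑ m ∈ S, ‖X (m+1) ω - X m ω‖^2) ∂μ)
        = ∑ m ∈ S, ∫ ω, ‖X (m+1) ω - X m ω‖^2 ∂μ := integral_finset_sum _ (fun m _ => hID2 m)
    rw [e1, e2, e3, e4, e5] at hm
    exact hm
  -- block rule
  have hm0le : ((⨆ l ∈ Finset.range (k - τ + 1), MeasurableSpace.comap (X l) inferInstance)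
      ⊔ (⨆ l ∈ Finset.range (k - τ + 1), MeasurableSpace.comap (jv l) inferInstance))
      ≤ (inferInstance : MeasurableSpace Ω) := by
    apply sup_le
    · exact iSup₂_le fun l _ => measurable_iff_comap_le.mp (hXm l)
    · exact iSup₂_le fun l _ => measurable_iff_comap_le.mp (hjvm l)
  have hXkm0 : Measurable[((⨆ l ∈ Finset.range (k - τ + 1), MeasurableSpace.comap (X l) inferInstance)
      ⊔ (⨆ l ∈ Finset.range (k - τ + 1), MeasurableSpace.comap (jv l) inferInstance))] (X (k-τ)) := by
    apply measurable_iff_comap_le.mpr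
    refine le_trans ?_ le_sup_left
    exact le_biSup (fun l => MeasurableSpace.comap (X l) inferInstance)
      (Finset.self_mem_range_succ (k - τ))
  have hproji : ∀ (i : Fin N), Continuous fun y : EuclideanSpace ℝ (Fin N) => y i := by
    intro i
    exact (continuous_apply i).comp (PiLp.continuous_ofLp (p := 2) (β := fun _ : Fin N => ℝ))
  have hgim : ∀ i : Fin N,
      Measurable[((⨆ l ∈ Finset.range (k - τ + 1), MeasurableSpace.comap (X l) inferInstance)
      ⊔ (⨆ l ∈ Finset.range (k - τ + 1), MeasurableSpace.comap (jv l) inferInstance))]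
      (fun ω => (gradient f (X (k-τ) ω) i)^2) := by
    intro i
    have hcont : Continuous fun y : EuclideanSpace ℝ (Fin N) => (gradient f y i)^2 :=
      ((hproji i).comp hgc).pow 2
    exact hcont.measurable.comp hXkm0
  have hBi : ∀ i : Fin N, MeasurableSet {ω | ik k ω = i} :=
    fun i => (hikm k) (measurableSet_singleton i)
  have hIgi : ∀ i : Fin N, Integrable (fun ω => (gradient f (X (k-τ) ω) i)^2) μ := by
    intro i
    apply Integrable.mono' (hIg2 (k-τ))
    · exact ((((hproji i).comp hgc).pow 2).measurable.comp (hXm (k-τ))).aestronglyMeasurable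
    · filter_upwards with ω
      rw [Real.norm_eq_abs, abs_of_nonneg (sq_nonneg _)]
      have h1 := eucl_coord_le' (gradient f (X (k-τ) ω)) i
      nlinarith only [h1, sq_abs (gradient f (X (k-τ) ω) i),
        abs_nonneg (gradient f (X (k-τ) ω) i), norm_nonneg (gradient f (X (k-τ) ω))]
  have hsplitik : (fun ω => (gradient f (X (k-τ) ω) (ik k ω))^2)
      = fun ω => ∑ i : Fin N, Set.indicator {ω' | ik k ω' = i}
          (fun ω' => (gradient f (X (k-τ) ω') i)^2) ω := by
    funext ω
    rw [Finset.sum_eq_single (ik k ω)]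
    · exact (Set.indicator_of_mem (show ω ∈ {ω' | ik k ω' = ik k ω} from rfl)
        (fun ω' => (gradient f (X (k-τ) ω') (ik k ω))^2)).symm
    · intro i _ hne
      exact Set.indicator_of_notMem (fun h => hne (by exact h.symm)) _
    · intro h; exact absurd (Finset.mem_univ _) h
  have hIgik : Integrable (fun ω => (gradient f (X (k-τ) ω) (ik k ω))^2) μ := by
    rw [hsplitik]
    exact integrable_finset_sum _ (fun i _ => (hIgi i).indicator (hBi i))
  have hblockA : (∫ ω, ‖gradient f (X (k-τ) ω)‖^2 ∂μ)
      = (N:ℝ) * ∫ ω, (gradient f (X (k-τ) ω) (ik k ω))^2 ∂μ := by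
    have hnorm : (fun ω => ‖gradient f (X (k-τ) ω)‖^2)
        = fun ω => ∑ i : Fin N, (gradient f (X (k-τ) ω) i)^2 := by
      funext ω; exact eucl_norm_sq' _
    rw [hnorm, integral_finset_sum _ (fun i _ => hIgi i)]
    rw [hsplitik, integral_finset_sum _ (fun i _ => (hIgi i).indicator (hBi i))]
    rw [Finset.mul_sum]
    apply Finset.sum_congr rfl
    intro i _
    rw [integral_indicator (hBi i)]
    rw [block_integral' μ _ hm0le _ N (fun A hA => hblock k i A hA) _ (hgim i)]
    rw [← mul_assoc, mul_inv_cancel₀ (by exact_mod_cast hN.ne' : (N:ℝ) ≠ 0), one_mul]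
  have hGpt2 : ∀ ω, (gradient f (X (k-τ) ω) (ik k ω))^2
      ≤ 2*((L/γ)^2 * ‖X (k+1) ω - X k ω‖^2)
        + 2*L^2*((τ:ℝ) * ∑ m ∈ S, ‖X (m+1) ω - X m ω‖^2) := by
    intro ω
    have hg2 : (gradient f (xhat k ω) (ik k ω))^2 = (L/γ)^2 * ‖X (k+1) ω - X k ω‖^2 := by
      rw [P1 ω]
      field_simp
    have h1 : |gradient f (X (k-τ) ω) (ik k ω)| ≤ |gradient f (xhat k ω) (ik k ω)|
        + L * ∑ m ∈ S, ‖X (m+1) ω - X m ω‖ := by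
      have h2 : |gradient f (X (k-τ) ω) (ik k ω) - gradient f (xhat k ω) (ik k ω)|
          ≤ ‖gradient f (X (k-τ) ω) - gradient f (xhat k ω)‖ := by
        have h := eucl_coord_le' (gradient f (X (k-τ) ω) - gradient f (xhat k ω)) (ik k ω)
        rwa [PiLp.sub_apply] at h
      have h3 : ‖gradient f (X (k-τ) ω) - gradient f (xhat k ω)‖
          ≤ L * ∑ m ∈ S, ‖X (m+1) ω - X m ω‖ := by
        refine (hlip _ _).trans ?_
        apply mul_le_mul_of_nonneg_left _ hL.le
        rw [norm_sub_rev]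
        exact P3 ω
      have h4 := abs_sub_abs_le_abs_sub (gradient f (X (k-τ) ω) (ik k ω))
        (gradient f (xhat k ω) (ik k ω))
      linarith only [h2, h3, h4]
    have h5 := sq_shift_bound (|gradient f (X (k-τ) ω) (ik k ω)|)
      (|gradient f (xhat k ω) (ik k ω)|) L (∑ m ∈ S, ‖X (m+1) ω - X m ω‖) _ (τ:ℝ) h1
      (abs_nonneg _) hL.le (Q1 ω)
    rw [sq_abs, sq_abs, hg2] at h5
    exact h5
  have hIgpt2R : Integrable (fun ω => 2*((L/γ)^2 * ‖X (k+1) ω - X k ω‖^2)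
      + 2*L^2*((τ:ℝ) * ∑ m ∈ S, ‖X (m+1) ω - X m ω‖^2)) μ :=
    (((hID2 k).const_mul _).const_mul 2).add ((hIS2.const_mul _).const_mul _)
  have hA3 : (∫ ω, (gradient f (X (k-τ) ω) (ik k ω))^2 ∂μ)
      ≤ 2*((L/γ)^2 * ∫ ω, ‖X (k+1) ω - X k ω‖^2 ∂μ)
        + 2*L^2*((τ:ℝ) * ∑ m ∈ S, ∫ ω, ‖X (m+1) ω - X m ω‖^2 ∂μ) := by
    have hm0 := integral_mono hIgik hIgpt2R hGpt2
    have hm : (∫ ω, (gradient f (X (k-τ) ω) (ik k ω))^2 ∂μ)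
        ≤ ∫ ω, (2*((L/γ)^2 * ‖X (k+1) ω - X k ω‖^2)
          + 2*L^2*((τ:ℝ) * ∑ m ∈ S, ‖X (m+1) ω - X m ω‖^2)) ∂μ := hm0
    have e1 : (∫ ω, (2*((L/γ)^2 * ‖X (k+1) ω - X k ω‖^2)
        + 2*L^2*((τ:ℝ) * ∑ m ∈ S, ‖X (m+1) ω - X m ω‖^2)) ∂μ)
        = (∫ ω, 2*((L/γ)^2 * ‖X (k+1) ω - X k ω‖^2) ∂μ)
          + ∫ ω, 2*L^2*((τ:ℝ) * ∑ m ∈ S, ‖X (m+1) ω - X m ω‖^2) ∂μ :=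
      integral_add (((hID2 k).const_mul _).const_mul 2) ((hIS2.const_mul _).const_mul _)
    have e2 : (∫ ω, 2*((L/γ)^2 * ‖X (k+1) ω - X k ω‖^2) ∂μ)
        = 2 * ∫ ω, ((L/γ)^2 * ‖X (k+1) ω - X k ω‖^2) ∂μ := integral_const_mul _ _
    have e2' : (∫ ω, ((L/γ)^2 * ‖X (k+1) ω - X k ω‖^2) ∂μ)
        = (L/γ)^2 * ∫ ω, ‖X (k+1) ω - X k ω‖^2 ∂μ := integral_const_mul _ _
    have e3 : (∫ ω, 2*L^2*((τ:ℝ) * ∑ m ∈ S, ‖X (m+1) ω - X m ω‖^2) ∂μ)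
        = 2*L^2* ∫ ω, ((τ:ℝ) * ∑ m ∈ S, ‖X (m+1) ω - X m ω‖^2) ∂μ := integral_const_mul _ _
    have e4 : (∫ ω, ((τ:ℝ) * ∑ m ∈ S, ‖X (m+1) ω - X m ω‖^2) ∂μ)
        = (τ:ℝ) * ∫ ω, (∑ m ∈ S, ‖X (m+1) ω - X m ω‖^2) ∂μ := integral_const_mul _ _
    have e5 : (∫ ω, (∑ m ∈ S, ‖X (m+1) ω - X m ω‖^2) ∂μ)
        = ∑ m ∈ S, ∫ ω, ‖X (m+1) ω - X m ω‖^2 ∂μ := integral_finset_sum _ (fun m _ => hID2 m)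
    rw [e1, e2, e2', e3, e4, e5] at hm
    exact hm
  -- final assembly
  set Ek : ℝ := ∫ ω, ‖X (k+1) ω - X k ω‖^2 ∂μ with hEkdef
  set SE : ℝ := ∑ m ∈ S, ∫ ω, ‖X (m+1) ω - X m ω‖^2 ∂μ with hSEdef
  set Av : ℝ := ∫ ω, ‖gradient f (X k ω)‖^2 ∂μ with hAvdef
  set Bv : ℝ := ∫ ω, ‖X k ω - xbar k ω‖^2 ∂μ with hBvdef
  set Pv : ℝ := ∫ ω, ‖gradient f (X k ω)‖ * ‖X k ω - xbar k ω‖ ∂μ with hPvdef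
  set Aτ : ℝ := ∫ ω, ‖gradient f (X (k-τ) ω)‖^2 ∂μ with hAτdef
  set Iik : ℝ := ∫ ω, (gradient f (X (k-τ) ω) (ik k ω))^2 ∂μ with hIikdef
  have hEknn : 0 ≤ Ek := hEΔnn k
  have hSEnn : 0 ≤ SE := Finset.sum_nonneg fun m _ => hEΔnn m
  have hτ1R : (1:ℝ) ≤ (τ:ℝ) := by exact_mod_cast hτ1
  have hN0 : (0:ℝ) ≤ (N:ℝ) := Nat.cast_nonneg N
  have hkey1 : Av + (τ:ℝ) * ES k ≤ α * (π k - π (k+1)) := by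
    have h4 : (N:ℝ) * Iik ≤ (N:ℝ) * (2*((L/γ)^2*Ek) + 2*L^2*((τ:ℝ)*SE)) :=
      mul_le_mul_of_nonneg_left hA3 hN0
    have h5 : (L/γ)^2 = L^2/γ^2 := by rw [div_pow]
    have hAv : Av ≤ 4*(N:ℝ)*(L^2/γ^2) * Ek + (4*(N:ℝ)+2)*L^2*(τ:ℝ)*SE := by
      rw [h5] at h4
      have r5 : 2*((N:ℝ)*(2*(L^2/γ^2*Ek) + 2*L^2*((τ:ℝ)*SE))) + 2*L^2*((τ:ℝ)*SE)
          = 4*(N:ℝ)*(L^2/γ^2)*Ek + (4*(N:ℝ)+2)*L^2*(τ:ℝ)*SE := by ring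
      linarith only [hA1, hblockA, h4, r5]
    have hT : (τ:ℝ) * ES k = (τ:ℝ) * δ * SE := by rw [hESval]; ring
    have t1 : 4*(N:ℝ)*(L^2/γ^2) * Ek ≤ β * ((τ:ℝ) * Ek) := by
      have hcoef : 4*(N:ℝ)*(L^2/γ^2) ≤ β * (τ:ℝ) := by
        have e : 8 * (N:ℝ) * L ^ 2 / γ ^ 2 = 8*(N:ℝ)*(L^2/γ^2) := by ring
        rw [e] at hβ1
        have hnn : 0 ≤ (N:ℝ)*(L^2/γ^2) := by positivity
        have hββ : β ≤ β * (τ:ℝ) := le_mul_of_one_le_right hβpos.le hτ1R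
        have r6 : 8*(N:ℝ)*(L^2/γ^2) - 4*(N:ℝ)*(L^2/γ^2) = 4*((N:ℝ)*(L^2/γ^2)) := by ring
        linarith only [hβ1, hββ, hnn, r6]
      calc 4*(N:ℝ)*(L^2/γ^2) * Ek ≤ (β * (τ:ℝ)) * Ek :=
            mul_le_mul_of_nonneg_right hcoef hEknn
        _ = β * ((τ:ℝ) * Ek) := by ring
    have t2 : ((4*(N:ℝ)+2)*L^2*(τ:ℝ) + (τ:ℝ)*δ) * SE ≤ β * SE := by
      apply mul_le_mul_of_nonneg_right _ hSEnn
      refine le_trans ?_ hβ2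
      have h8 : 0 ≤ 8*(N:ℝ)*L^2*(τ:ℝ) := by positivity
      have r7 : (12*(N:ℝ)+2)*L^2*(τ:ℝ) + δ*(τ:ℝ)
          - ((4*(N:ℝ)+2)*L^2*(τ:ℝ) + (τ:ℝ)*δ) = 8*(N:ℝ)*L^2*(τ:ℝ) := by ring
      linarith only [h8, r7]
    have hd2 : α * ((L*Dc/(4*(τ:ℝ))) * ((τ:ℝ)*Ek + SE)) ≤ α * (π k - π (k+1)) :=
      mul_le_mul_of_nonneg_left hdesc hαpos.le
    have hd3 : α * ((L*Dc/(4*(τ:ℝ))) * ((τ:ℝ)*Ek + SE)) = β * ((τ:ℝ)*Ek + SE) := by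
      rw [← hαval]; ring
    have r1 : (4*(N:ℝ)+2)*L^2*(τ:ℝ)*SE + (τ:ℝ)*δ*SE
        = ((4*(N:ℝ)+2)*L^2*(τ:ℝ) + (τ:ℝ)*δ)*SE := by ring
    have r2 : β*((τ:ℝ)*Ek + SE) = β*((τ:ℝ)*Ek) + β*SE := by ring
    linarith only [hAv, t1, t2, hd2, hd3, hT, r1, r2]
  have hTnn : 0 ≤ (τ:ℝ) * ES k := mul_nonneg hτR.le hESnn
  have hkey2 : (π k)^2 ≤ (Av + (τ:ℝ)*ES k) * (Bv + (τ:ℝ)*ES k) := by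
    have h2 : (π k)^2 ≤ (Pv + (τ:ℝ)*ES k)^2 := by
      apply pow_le_pow_left₀ hπnn hπle
    have h6 : (2*Pv) * ((τ:ℝ)*ES k) ≤ (Av + Bv) * ((τ:ℝ)*ES k) := by
      apply mul_le_mul_of_nonneg_right _ hTnn
      linarith only [hC4]
    have r3 : (Pv + (τ:ℝ)*ES k)^2
        = Pv^2 + (2*Pv)*((τ:ℝ)*ES k) + ((τ:ℝ)*ES k)^2 := by ring
    have r4 : (Av + (τ:ℝ)*ES k)*(Bv + (τ:ℝ)*ES k)
        = Av*Bv + (Av + Bv)*((τ:ℝ)*ES k) + ((τ:ℝ)*ES k)^2 := by ring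
    linarith only [h2, hC5, h6, r3, r4]
  have hBTnn : 0 ≤ Bv + (τ:ℝ)*ES k := add_nonneg hBnn hTnn
  calc (π k)^2 ≤ (Av + (τ:ℝ)*ES k) * (Bv + (τ:ℝ)*ES k) := hkey2
    _ ≤ (α * (π k - π (k+1))) * (Bv + (τ:ℝ)*ES k) := mul_le_mul_of_nonneg_right hkey1 hBTnn
    _ = α * (π k - π (k+1)) * ((τ:ℝ) * ES k + Bv) := by ring
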